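/- Suppose F is a strategy (for player TWO in game G1) mapping finite sequences of natural numbers to natural numbers, which is a winning strategy for TWO. Then for every finite sequence σ of natural numbers there exist a finite sequence τ and a natural number n such that F(σ ⌢ τ ⌢ ⟨y⟩) > y for every y > n. -/
import Mathlib


open Filter Set

/-- A strategy: maps finite sequences of the opponent's moves to a natural number. -/
abbrev Strat := List ℕ → ℕ

/-- TWO's move in inning `k` (0-indexed) when following strategy `σ` against ONE's
moves `m`: TWO has seen `m 0, …, m k`. -/
def twoFollow (σ : Strat) (m : ℕ → ℕ) (k : ℕ) : ℕ :=
  σ (List.ofFn fun i : Fin (k + 1) => m i)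

/-- ONE's move in inning `k` when following strategy `σ` against TWO's moves `n`:
ONE's move depends on `n 0, …, n (k-1)` (the first move is `σ []`). -/
def oneFollow (σ : Strat) (n : ℕ → ℕ) (k : ℕ) : ℕ :=
  σ (List.ofFn fun i : Fin k => n i)

/-- TWO wins the play `(m 0, n 0, m 1, n 1, …)` of the game `G1(F)`. -/
def TwoWins1 (F : Set (Set ℕ)) (m n : ℕ → ℕ) : Prop :=
  StrictMono n ∧ (∀ N : ℕ, ∃ k, N ≤ k ∧ m k < n k) ∧ Set.range n ∈ F

/-- TWO wins the play `(m 0, n 0, m 1, n 1, …)` of the game `G2(F)`. -/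
def TwoWins2 (F : Set (Set ℕ)) (m n : ℕ → ℕ) : Prop :=
  (∀ᶠ k in Filter.atTop, m k < n k) ∧ Set.range n ∈ F

/-- `σ` is a winning strategy for TWO in `G1(F)`. -/
def TwoWinning1 (F : Set (Set ℕ)) (σ : Strat) : Prop :=
  ∀ m : ℕ → ℕ, TwoWins1 F m (twoFollow σ m)

/-- `σ` is a winning strategy for ONE in `G1(F)`. -/
def OneWinning1 (F : Set (Set ℕ)) (σ : Strat) : Prop :=
  ∀ n : ℕ → ℕ, ¬ TwoWins1 F (oneFollow σ n) n

/-- `σ` is a winning strategy for TWO in `G2(F)`. -/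
def TwoWinning2 (F : Set (Set ℕ)) (σ : Strat) : Prop :=
  ∀ m : ℕ → ℕ, TwoWins2 F m (twoFollow σ m)

/-- `σ` is a winning strategy for ONE in `G2(F)`. -/
def OneWinning2 (F : Set (Set ℕ)) (σ : Strat) : Prop :=
  ∀ n : ℕ → ℕ, ¬ TwoWins2 F (oneFollow σ n) n

/-- `F` is a non-principal filter on `ℕ`: upward closed, closed under finite
intersections, and every member is infinite. -/
def IsNPFilter (F : Set (Set ℕ)) : Prop :=
  (∀ X ∈ F, ∀ Y : Set ℕ, X ⊆ Y → Y ∈ F) ∧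
  (∀ X ∈ F, ∀ Y ∈ F, X ∩ Y ∈ F) ∧
  (∀ X ∈ F, X.Infinite)

/-- `F` is a rare filter: every partition of `ℕ` into disjoint (nonempty) finite sets
admits a selector in `F`. -/
def IsRare (F : Set (Set ℕ)) : Prop :=
  ∀ I : ℕ → Set ℕ, (∀ n, (I n).Finite) → (∀ n, (I n).Nonempty) →
    (Pairwise fun i j => Disjoint (I i) (I j)) → (⋃ n, I n) = Set.univ →
    ∃ X ∈ F, ∀ n, (X ∩ I n).Subsingleton

/-- The subset of Cantor space `2^ℕ` corresponding to the filter `F`. -/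
def cantorCoded (F : Set (Set ℕ)) : Set (ℕ → Bool) :=
  {χ | {n | χ n = true} ∈ F}

/-- The increasing enumeration of `X ⊆ ℕ`. -/
noncomputable def enum (X : Set ℕ) : ℕ → ℕ := Nat.nth (· ∈ X)

/-- `g` eventually dominates `f`. -/
def EvDom (g f : ℕ → ℕ) : Prop := ∀ᶠ k in Filter.atTop, f k < g k

/-- The Claim: if `σ` is a winning strategy for TWO in `G1(F)`, then for each finite
sequence `s` there are a finite sequence `t` and an `n` such that
`σ (s ++ t ++ [y]) > y` for every `y > n`. -/
theorem stmt8 (F : Set (Set ℕ)) (hF : IsNPFilter F) (σ : Strat) (hσ : TwoWinning1 F σ) :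
    ∀ s : List ℕ, ∃ t : List ℕ, ∃ n : ℕ, ∀ y : ℕ, n < y → y < σ (s ++ t ++ [y]) := by
  intro s
  by_contra hc
  push_neg at hc
  have h' : ∀ t : List ℕ, ∃ y, σ (s ++ t ++ [y]) ≤ y := fun t =>
    ⟨(hc t 0).choose, (hc t 0).choose_spec.2⟩
  choose Y hY using h'
  let T : ℕ → List ℕ := fun k => Nat.rec [] (fun _ tk => tk ++ [Y tk]) k
  have hT : ∀ k, T (k+1) = T k ++ [Y (T k)] := fun k => rfl
  let m : ℕ → ℕ := fun k => if hk : k < s.length then s.get ⟨k, hk⟩ else Y (T (k - s.length))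
  have hm1 : ∀ k, m (s.length + k) = Y (T k) := by
    intro k
    have : ¬ (s.length + k < s.length) := by omega
    simp [m, this]
  have key : ∀ k, List.ofFn (fun i : Fin (s.length + k) => m i) = s ++ T k := by
    intro k
    induction k with
    | zero =>
      rw [show T 0 = [] from rfl, List.append_nil]
      apply List.ext_getElem (by simp)
      intro i h1 h2
      simp only [List.getElem_ofFn]
      have hi : (i : ℕ) < s.length := h2
      simp [m, hi]
    | succ k ih =>
      rw [show s.length + (k+1) = (s.length + k) + 1 from rfl, List.ofFn_succ']
      have : (fun i : Fin (s.length + k) => m i.castSucc) = fun i : Fin (s.length + k) => m i := by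
        funext i; simp
      rw [this, ih, List.concat_eq_append]
      have : ((Fin.last (s.length + k)) : ℕ) = s.length + k := rfl
      rw [this, hm1 k, hT k, List.append_assoc]
  obtain ⟨_, hio, _⟩ := hσ m
  obtain ⟨k, hk1, hk2⟩ := hio s.length
  obtain ⟨j, rfl⟩ := Nat.exists_eq_add_of_le hk1
  have heq : twoFollow σ m (s.length + j) = σ (s ++ T j ++ [Y (T j)]) := by
    unfold twoFollow
    rw [show s.length + j + 1 = s.length + (j+1) from rfl, key (j+1), hT j,
      ← List.append_assoc]
  rw [heq, hm1 j] at hk2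
  exact absurd hk2 (not_lt.mpr (hY (T j)))
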